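/- The homomorphism ρ, sending a unit quaternion q to the restriction to W of the conjugation map h ↦ q h q⁻¹, is a surjective group homomorphism from the group of unit quaternions onto the group of orientation-preserving linear isometries of W (the rotation group of the 3-dimensional space W, i.e. SO(3)), and its kernel is {1, −1}. -/

import Mathlib

open Quaternion
open scoped Quaternion

/-- The 3-dimensional real subspace `W` of purely imaginary quaternions. -/
def W : Submodule ℝ ℍ[ℝ] where
  carrier := {h : ℍ[ℝ] | h.re = 0}
  add_mem' := by
    intro a b ha hb
    simp only [Set.mem_setOf_eq] at *
    simp [ha, hb]
  zero_mem' := by simp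
  smul_mem' := by
    intro c a ha
    simp only [Set.mem_setOf_eq] at *
    simp [ha]

theorem mem_W {h : ℍ[ℝ]} : h ∈ W ↔ h.re = 0 := Iff.rfl

def qmk (a b c d : ℝ) : ℍ[ℝ] := ⟨a, b, c, d⟩

@[simp] theorem qmk_re (a b c d : ℝ) : (qmk a b c d).re = a := rfl
@[simp] theorem qmk_imI (a b c d : ℝ) : (qmk a b c d).imI = b := rfl
@[simp] theorem qmk_imJ (a b c d : ℝ) : (qmk a b c d).imJ = c := rfl
@[simp] theorem qmk_imK (a b c d : ℝ) : (qmk a b c d).imK = d := rfl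

noncomputable def eW : W ≃ₗ[ℝ] (Fin 3 → ℝ) where
  toFun h := ![(h : ℍ[ℝ]).imI, (h : ℍ[ℝ]).imJ, (h : ℍ[ℝ]).imK]
  map_add' a b := by
    funext m; fin_cases m <;> simp
  map_smul' c a := by
    funext m; fin_cases m <;> simp
  invFun v := ⟨qmk 0 (v 0) (v 1) (v 2), by simp [mem_W]⟩
  left_inv a := by
    apply Subtype.ext
    ext <;> simp [(mem_W.mp a.2)]
  right_inv v := by
    funext m; fin_cases m <;> simp

noncomputable def BW : Module.Basis (Fin 3) ℝ W := Module.Basis.ofEquivFun eW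

theorem finrank_W : Module.finrank ℝ W = 3 := by
  rw [Module.finrank_eq_card_basis BW]; simp

theorem inv_eq_star (q : ℍ[ℝ]) (hq : ‖q‖ = 1) : q⁻¹ = star q := by
  have h1 : normSq q = 1 := by
    have := Quaternion.normSq_eq_norm_mul_self (a := q)
    rw [hq] at this; simpa using this
  show (normSq q)⁻¹ • star q = star q
  rw [h1]; simp

theorem re_conj (q : ℍ[ℝ]) (hq : ‖q‖ = 1) (h : ℍ[ℝ]) (hh : h.re = 0) :
    (q * h * q⁻¹).re = 0 := by
  rw [inv_eq_star q hq]
  simp [Quaternion.re_mul, hh]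
  ring

noncomputable def conjW (q : ℍ[ℝ]) (hq : ‖q‖ = 1) : W →ₗ[ℝ] W where
  toFun h := ⟨q * (h : ℍ[ℝ]) * q⁻¹, re_conj q hq h (mem_W.mp h.2)⟩
  map_add' a b := by
    apply Subtype.ext; simp [mul_add, add_mul]
  map_smul' c a := by
    apply Subtype.ext; simp [Algebra.mul_smul_comm, Algebra.smul_mul_assoc]

theorem normSq_one' (q : ℍ[ℝ]) (hq : ‖q‖ = 1) :
    q.re^2 + q.imI^2 + q.imJ^2 + q.imK^2 = 1 := by
  have h1 : normSq q = 1 := by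
    have := Quaternion.normSq_eq_norm_mul_self (a := q)
    rw [hq] at this; simpa using this
  rw [Quaternion.normSq_def'] at h1; linarith [sq_nonneg q.re]

theorem det_conjW (q : ℍ[ℝ]) (hq : ‖q‖ = 1) : LinearMap.det (conjW q hq) = 1 := by
  rw [← LinearMap.det_toMatrix BW, Matrix.det_fin_three]
  simp only [LinearMap.toMatrix_apply, BW, Module.Basis.ofEquivFun_repr_apply, Module.Basis.coe_ofEquivFun]
  simp [conjW, eW, inv_eq_star q hq, Quaternion.imI_mul, Quaternion.imJ_mul, Quaternion.imK_mul,
    Quaternion.re_mul]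
  have h1 := normSq_one' q hq
  linear_combination ((q.re^2+q.imI^2+q.imJ^2+q.imK^2)^2 + (q.re^2+q.imI^2+q.imJ^2+q.imK^2) + 1) * h1

theorem pure_mul_mul (a b : ℍ[ℝ]) (ha : a.re = 0) (hb : b.re = 0) :
    a * b * a = (normSq a) • b - (2 * (a * star b).re) • a := by
  ext <;> simp [Quaternion.normSq_def', ha, hb] <;> ring

theorem star_pure (a : ℍ[ℝ]) (ha : a.re = 0) : star a = -a := by
  ext <;> simp [ha]

theorem refl_eq (v : W) (hv : v ≠ 0) (x : W) :
    ((Submodule.reflection (ℝ ∙ v)ᗮ x : W) : ℍ[ℝ]) =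
      (‖(v : ℍ[ℝ])‖⁻¹ • (v : ℍ[ℝ])) * x * (‖(v : ℍ[ℝ])‖⁻¹ • (v : ℍ[ℝ])) := by
  have hv0 : (v : ℍ[ℝ]) ≠ 0 := fun h => hv (Subtype.ext h)
  have hnv : ‖(v : ℍ[ℝ])‖ ≠ 0 := norm_ne_zero_iff.mpr hv0
  have hinner : (inner ℝ v x : ℝ) = ((v : ℍ[ℝ]) * star (x : ℍ[ℝ])).re := rfl
  have hnorm : ‖v‖ = ‖(v : ℍ[ℝ])‖ := rfl
  have hns : normSq (v : ℍ[ℝ]) = ‖(v : ℍ[ℝ])‖ ^ 2 := by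
    rw [Quaternion.normSq_eq_norm_mul_self]; ring
  have key := pure_mul_mul (v : ℍ[ℝ]) (x : ℍ[ℝ]) (mem_W.mp v.2) (mem_W.mp x.2)
  rw [hns] at key
  have e1 : (‖(v : ℍ[ℝ])‖⁻¹ • (v : ℍ[ℝ])) * x * (‖(v : ℍ[ℝ])‖⁻¹ • (v : ℍ[ℝ]))
      = (‖(v : ℍ[ℝ])‖⁻¹ * ‖(v : ℍ[ℝ])‖⁻¹) • ((v : ℍ[ℝ]) * x * (v : ℍ[ℝ])) := by
    rw [Algebra.smul_mul_assoc, Algebra.smul_mul_assoc, Algebra.mul_smul_comm, smul_smul]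
  rw [e1, key, Submodule.reflection_orthogonal_apply, Submodule.reflection_singleton_apply]
  push_cast [hinner, hnorm, RCLike.ofReal_real_eq_id, id]
  match_scalars <;> field_simp
  all_goals first | (left; ring) | ring

set_option maxHeartbeats 1000000 in
set_option synthInstance.maxHeartbeats 200000 in
theorem refl_list (l : List W) :
    ∃ (q : ℍ[ℝ]) (ε : ℝ), ‖q‖ = 1 ∧ (ε = 1 ∨ ε = -1) ∧
      ∀ h : W, (((l.map fun v => Submodule.reflection (ℝ ∙ v)ᗮ).prod h : W) : ℍ[ℝ])
        = ε • (q * (h : ℍ[ℝ]) * q⁻¹) := by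
  induction l with
  | nil =>
    refine ⟨1, 1, by simp, Or.inl rfl, fun h => by simp⟩
  | cons v l IH =>
    obtain ⟨q, ε, hq, hε, hF⟩ := IH
    rw [List.map_cons, List.prod_cons]
    by_cases hv : v = 0
    · refine ⟨q, ε, hq, hε, fun h => ?_⟩
      subst hv
      have hrefl : ∀ x : W, Submodule.reflection (ℝ ∙ (0 : W))ᗮ x = x := fun x =>
        Submodule.reflection_mem_subspace_eq_self (by
          rw [Submodule.span_zero_singleton, Submodule.bot_orthogonal_eq_top]; trivial)
      rw [LinearIsometryEquiv.coe_mul, Function.comp_apply, hrefl]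
      exact hF h
    · set u : ℍ[ℝ] := ‖(v : ℍ[ℝ])‖⁻¹ • (v : ℍ[ℝ]) with hu
      have hv0 : (v : ℍ[ℝ]) ≠ 0 := fun h => hv (Subtype.ext h)
      have hnu : ‖u‖ = 1 := by
        rw [hu, norm_smul]
        simp [norm_ne_zero_iff.mpr hv0]
      have hure : u.re = 0 := by
        rw [hu]; simp [mem_W.mp v.2]
      have huinv : u⁻¹ = -u := by
        rw [inv_eq_star u hnu, star_pure u hure]
      have hε' : -ε = 1 ∨ -ε = -1 := by
        rcases hε with h | h
        · exact Or.inr (by rw [h])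
        · exact Or.inl (by rw [h]; ring)
      refine ⟨u * q, -ε, by rw [norm_mul, hnu, hq]; norm_num, hε', fun h => ?_⟩
      have step : ((Submodule.reflection (ℝ ∙ v)ᗮ * (l.map fun v => Submodule.reflection (ℝ ∙ v)ᗮ).prod) h : ℍ[ℝ])
          = u * (((l.map fun v => Submodule.reflection (ℝ ∙ v)ᗮ).prod h : W) : ℍ[ℝ]) * u := by
        rw [LinearIsometryEquiv.coe_mul, Function.comp_apply]
        exact refl_eq v hv _
      clear_value u
      rw [step, hF h, mul_inv_rev, huinv]
      simp only [Algebra.mul_smul_comm, Algebra.smul_mul_assoc, mul_neg, smul_neg, neg_smul,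
        neg_neg]
      congr 1
      noncomm_ring

theorem surj (f : W ≃ₗᵢ[ℝ] W) (hdet : LinearMap.det (f.toLinearEquiv.toLinearMap) = 1) :
    ∃ q : ℍ[ℝ], ‖q‖ = 1 ∧ ∀ h : W, ((f h : ℍ[ℝ])) = q * (h : ℍ[ℝ]) * q⁻¹ := by
  obtain ⟨l, -, hl⟩ := f.reflections_generate_dim
  obtain ⟨q, ε, hq, hε, hF⟩ := refl_list l
  rw [← hl] at hF
  have hlin : f.toLinearEquiv.toLinearMap = ε • conjW q hq := by
    refine LinearMap.ext fun h => Subtype.ext ?_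
    rw [show (f.toLinearEquiv.toLinearMap h : ℍ[ℝ]) = ((f h : W) : ℍ[ℝ]) from rfl, hF h]
    simp [conjW]
  rw [hlin, LinearMap.det_smul, det_conjW, finrank_W] at hdet
  have hε1 : ε = 1 := by
    rcases hε with h | h
    · exact h
    · rw [h] at hdet; norm_num at hdet
  exact ⟨q, hq, fun h => by rw [hF h, hε1, one_smul]⟩

/-- The map `ρ` sending a unit quaternion `q` to the restriction to `W` of the conjugation
`h ↦ q h q⁻¹` is a surjective group homomorphism from the unit quaternions onto the group
of orientation-preserving linear isometries of `W` (the rotation group `SO(3)` of `W`),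
with kernel `{1, -1}`: conjugation preserves `W` and is multiplicative in `q`, every
linear isometry of `W` of determinant `1` arises as conjugation by some unit quaternion,
and a unit quaternion acts trivially on `W` precisely when it is `1` or `-1`. -/
theorem stmt4 :
    (∀ q : ℍ[ℝ], ‖q‖ = 1 → ∀ h : ℍ[ℝ], h.re = 0 → (q * h * q⁻¹).re = 0) ∧
    (∀ p q : ℍ[ℝ], ‖p‖ = 1 → ‖q‖ = 1 → ∀ h : ℍ[ℝ],
      (p * q) * h * (p * q)⁻¹ = p * (q * h * q⁻¹) * p⁻¹) ∧
    (∀ f : W ≃ₗᵢ[ℝ] W, LinearMap.det (f.toLinearEquiv.toLinearMap) = 1 →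
      ∃ q : ℍ[ℝ], ‖q‖ = 1 ∧ ∀ h : W, ((f h : ℍ[ℝ])) = q * (h : ℍ[ℝ]) * q⁻¹) ∧
    (∀ q : ℍ[ℝ], ‖q‖ = 1 →
      ((∀ h : ℍ[ℝ], h.re = 0 → q * h * q⁻¹ = h) ↔ (q = 1 ∨ q = -1))) := by
  refine ⟨re_conj, fun p q _ _ h => by rw [mul_inv_rev]; noncomm_ring, surj, fun q hq => ?_⟩
  have hq0 : q ≠ 0 := by intro h; rw [h] at hq; simp at hq
  constructor
  · intro H
    have key : ∀ h : ℍ[ℝ], h.re = 0 → q * h = h * q := by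
      intro h hh
      have := congrArg (· * q) (H h hh)
      simpa [mul_assoc, inv_mul_cancel₀ hq0] using this
    have hi' := key (qmk 0 1 0 0) rfl
    have hj' := key (qmk 0 0 1 0) rfl
    rw [Quaternion.ext_iff] at hi' hj'
    simp only [Quaternion.re_mul, Quaternion.imI_mul, Quaternion.imJ_mul,
      Quaternion.imK_mul] at hi' hj'
    have hb : q.imI = 0 := by
      have := hj'.2.2.2; simp at this ⊢; linarith
    have hc : q.imJ = 0 := by
      have := hi'.2.2.2; simp at this ⊢; linarith
    have hd : q.imK = 0 := by
      have := hi'.2.2.1; simp at this ⊢; linarith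
    have hn := Quaternion.normSq_eq_norm_mul_self (a := q)
    rw [hq, Quaternion.normSq_def', hb, hc, hd] at hn
    simp at hn
    rcases hn with h | h
    · left; ext <;> simp [h, hb, hc, hd]
    · right; ext <;> simp [h, hb, hc, hd]
  · rintro (rfl | rfl) h hh <;> simp [inv_neg]
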